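/- Let T be any unitary operator on ℂ^d ⊗ ℂ^d satisfying T (X ⊗ I) T† = X† ⊗ I, T (I ⊗ X) T† = I ⊗ X†, T (Z ⊗ I) T† = Z† ⊗ X†, and T (I ⊗ Z) T† = X† ⊗ Z†. Then T is an imprimitive two-qudit gate: (i) T maps every product basis vector e_j ⊗ e_k to a maximally entangled state, i.e. the reduced density matrix of T(e_j ⊗ e_k) on either factor equals I/d; and (ii) there exist no unitaries S₁, S₂ on ℂ^d such that T = S₁ ⊗ S₂ or T = (S₁ ⊗ S₂)∘P, where P is the swap operator P(u ⊗ v) = v ⊗ u. -/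

import Mathlib

open Matrix Kronecker

/-- ω = exp(2πi/d), a primitive d-th root of unity. -/
noncomputable def qomega (d : ℕ) : ℂ := Complex.exp (2 * Real.pi * Complex.I / d)

/-- Generalized Pauli `Z`: `Z e_k = ω^k e_k`. -/
noncomputable def Zmat (d : ℕ) [NeZero d] : Matrix (ZMod d) (ZMod d) ℂ :=
  Matrix.diagonal fun k => qomega d ^ k.val

/-- Generalized Pauli `X`: `X e_k = e_{k-1}` (index mod d). -/
noncomputable def Xmat (d : ℕ) [NeZero d] : Matrix (ZMod d) (ZMod d) ℂ :=
  Matrix.of fun j k => if k = j + 1 then 1 else 0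

/-- The swap operator `P (u ⊗ v) = v ⊗ u` on `ℂ^d ⊗ ℂ^d`. -/
noncomputable def swapOp (d : ℕ) [NeZero d] :
    Matrix (ZMod d × ZMod d) (ZMod d × ZMod d) ℂ :=
  Matrix.of fun p q => if p.1 = q.2 ∧ p.2 = q.1 then 1 else 0

lemma qprim (d : ℕ) [NeZero d] : IsPrimitiveRoot (qomega d) d :=
  Complex.isPrimitiveRoot_exp d (NeZero.ne d)

lemma qstar (d : ℕ) [NeZero d] : star (qomega d) = (qomega d)⁻¹ := by
  have h1 : qomega d ^ d = 1 := (qprim d).pow_eq_one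
  have habs : ‖qomega d‖ = 1 := by
    have := Complex.norm_eq_one_of_pow_eq_one h1 (NeZero.ne d)
    simpa using this
  have hn : Complex.normSq (qomega d) = 1 := by
    rw [Complex.normSq_eq_norm_sq, habs]; norm_num
  rw [Complex.inv_def, hn]; simp

lemma qne (d : ℕ) [NeZero d] : qomega d ≠ 0 := by
  intro h
  have h1 : qomega d ^ d = 1 := (qprim d).pow_eq_one
  rw [h, zero_pow (NeZero.ne d)] at h1
  exact zero_ne_one h1

lemma sum_zmod_pow (d : ℕ) [NeZero d] (ζ : ℂ) :
    ∑ c : ZMod d, ζ ^ (ZMod.val c) = ∑ t ∈ Finset.range d, ζ ^ t := by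
  refine Finset.sum_bij' (fun c _ => ZMod.val c) (fun t _ => (t : ZMod d)) ?_ ?_ ?_ ?_ ?_
  · intro a _; exact Finset.mem_range.2 (ZMod.val_lt a)
  · intro t _; exact Finset.mem_univ _
  · intro a _; exact ZMod.natCast_rightInverse a
  · intro t ht; exact ZMod.val_cast_of_lt (Finset.mem_range.1 ht)
  · intro a _; rfl

lemma iter_rec (d : ℕ) [NeZero d] (ω : ℂ) (m : ℕ) (f : ZMod d → ℂ)
    (hrec : ∀ c, f c = ω ^ m * f (c + 1)) :
    ∀ t : ℕ, f 0 = (ω ^ m) ^ t * f (t : ZMod d) := by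
  intro t; induction t with
  | zero => simp
  | succ n ih =>
    rw [ih, hrec ((n : ZMod d))]
    push_cast
    ring

lemma norm_shift (ω : ℂ) (hω0 : ω ≠ 0) (hstar : star ω = ω⁻¹) (m : ℕ) (x y : ℂ)
    (h : x = ω ^ m * y) : x * star x = y * star y := by
  subst h
  rw [star_mul', star_pow, hstar, inv_pow]
  field_simp

lemma aux_sum (d : ℕ) [NeZero d] (ω : ℂ) (hprim : IsPrimitiveRoot ω d)
    (hstar : star ω = ω⁻¹) (hω0 : ω ≠ 0)
    (f : ZMod d → ZMod d → ℂ) (v : ℂ) (J : ℕ)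
    (hrec : ∀ a c, f a c = ω ^ (J + ZMod.val a) * f a (c + 1))
    (hnorm : ∀ a, f a 0 * star (f a 0) = v)
    (a b : ZMod d) :
    ∑ c : ZMod d, f a c * star (f b c) = if a = b then (d : ℂ) * v else 0 := by
  have hωd : ω ^ d = 1 := hprim.pow_eq_one
  have key : ∀ (x : ZMod d) (c : ZMod d),
      f x 0 = (ω ^ (J + ZMod.val x)) ^ (ZMod.val c) * f x c := by
    intro x c
    have h := iter_rec d ω (J + ZMod.val x) (f x) (hrec x) (ZMod.val c)
    rwa [ZMod.natCast_rightInverse c] at h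
  set ζ : ℂ := (ω ^ (J + ZMod.val a))⁻¹ * ω ^ (J + ZMod.val b) with hζ
  have hA : (ω ^ (J + ZMod.val a)) ≠ 0 := pow_ne_zero _ hω0
  have hB : (ω ^ (J + ZMod.val b)) ≠ 0 := pow_ne_zero _ hω0
  have hterm : ∀ c : ZMod d,
      f a c * star (f b c) = (f a 0 * star (f b 0)) * ζ ^ (ZMod.val c) := by
    intro c
    have hsB : star ((ω ^ (J + ZMod.val b)) ^ ZMod.val c)
        = ((ω ^ (J + ZMod.val b)) ^ ZMod.val c)⁻¹ := by
      rw [star_pow, star_pow, hstar, inv_pow, inv_pow]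
    rw [key a c, key b c, star_mul', hsB, hζ, mul_pow, inv_pow]
    field_simp
  rw [Finset.sum_congr rfl (fun c _ => hterm c), ← Finset.mul_sum]
  by_cases hab : a = b
  · subst hab
    have hζ1 : ζ = 1 := inv_mul_cancel₀ hA
    rw [if_pos rfl, hζ1]
    simp only [one_pow, Finset.sum_const, Finset.card_univ, ZMod.card, nsmul_eq_mul, mul_one]
    rw [hnorm a]; ring
  · rw [if_neg hab]
    have hζd : ζ ^ d = 1 := by
      rw [hζ, mul_pow, inv_pow, ← pow_mul, ← pow_mul,
        mul_comm (J + ZMod.val a) d, mul_comm (J + ZMod.val b) d,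
        pow_mul, pow_mul, hωd, one_pow, one_pow]
      simp
    have hζ1 : ζ ≠ 1 := by
      intro h
      apply hab
      have hBA : ω ^ (J + ZMod.val a) = ω ^ (J + ZMod.val b) :=
        (inv_mul_eq_one₀ hA).1 h
      rw [pow_add, pow_add] at hBA
      have h2 := mul_left_cancel₀ (pow_ne_zero J hω0) hBA
      exact ZMod.val_injective d (hprim.pow_inj (ZMod.val_lt a) (ZMod.val_lt b) h2)
    rw [sum_zmod_pow, geom_sum_eq hζ1, hζd]
    simp

lemma entryL3 (d : ℕ) [NeZero d] (T : Matrix (ZMod d × ZMod d) (ZMod d × ZMod d) ℂ)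
    (a b j k : ZMod d) :
    (T * (Zmat d ⊗ₖ (1 : Matrix (ZMod d) (ZMod d) ℂ))) (a, b) (j, k)
      = T (a, b) (j, k) * qomega d ^ (ZMod.val j) := by
  simp [Matrix.mul_apply, Zmat, Matrix.one_apply, Fintype.sum_prod_type,
    Matrix.diagonal_apply, ite_and, mul_ite, Finset.sum_ite_eq, Finset.sum_ite_eq']

lemma entryR3 (d : ℕ) [NeZero d] (T : Matrix (ZMod d × ZMod d) (ZMod d × ZMod d) ℂ)
    (a b j k : ZMod d) :
    (((Zmat d)ᴴ ⊗ₖ (Xmat d)ᴴ) * T) (a, b) (j, k)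
      = star (qomega d ^ (ZMod.val a)) * T (a, b - 1) (j, k) := by
  simp [Matrix.mul_apply, Zmat, Xmat, Matrix.conjTranspose_apply, Fintype.sum_prod_type,
    Matrix.diagonal_apply, ite_and, mul_ite, ite_mul, ← sub_eq_iff_eq_add,
    Finset.sum_ite_eq, Finset.sum_ite_eq']

lemma entryL4 (d : ℕ) [NeZero d] (T : Matrix (ZMod d × ZMod d) (ZMod d × ZMod d) ℂ)
    (a b j k : ZMod d) :
    (T * ((1 : Matrix (ZMod d) (ZMod d) ℂ) ⊗ₖ Zmat d)) (a, b) (j, k)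
      = T (a, b) (j, k) * qomega d ^ (ZMod.val k) := by
  simp [Matrix.mul_apply, Zmat, Matrix.one_apply, Fintype.sum_prod_type,
    Matrix.diagonal_apply, ite_and, mul_ite, Finset.sum_ite_eq, Finset.sum_ite_eq']

lemma entryR4 (d : ℕ) [NeZero d] (T : Matrix (ZMod d × ZMod d) (ZMod d × ZMod d) ℂ)
    (a b j k : ZMod d) :
    (((Xmat d)ᴴ ⊗ₖ (Zmat d)ᴴ) * T) (a, b) (j, k)
      = star (qomega d ^ (ZMod.val b)) * T (a - 1, b) (j, k) := by
  simp [Matrix.mul_apply, Zmat, Xmat, Matrix.conjTranspose_apply, Fintype.sum_prod_type,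
    Matrix.diagonal_apply, ite_and, mul_ite, ite_mul, ← sub_eq_iff_eq_add,
    Finset.sum_ite_eq, Finset.sum_ite_eq']

theorem two_qudit_gate_imprimitive (d : ℕ) [NeZero d] (hd : 2 ≤ d)
    (T : Matrix (ZMod d × ZMod d) (ZMod d × ZMod d) ℂ)
    (hT : T ∈ Matrix.unitaryGroup (ZMod d × ZMod d) ℂ)
    (h1 : T * (Xmat d ⊗ₖ (1 : Matrix (ZMod d) (ZMod d) ℂ)) * Tᴴ
        = (Xmat d)ᴴ ⊗ₖ (1 : Matrix (ZMod d) (ZMod d) ℂ))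
    (h2 : T * ((1 : Matrix (ZMod d) (ZMod d) ℂ) ⊗ₖ Xmat d) * Tᴴ
        = (1 : Matrix (ZMod d) (ZMod d) ℂ) ⊗ₖ (Xmat d)ᴴ)
    (h3 : T * (Zmat d ⊗ₖ (1 : Matrix (ZMod d) (ZMod d) ℂ)) * Tᴴ
        = (Zmat d)ᴴ ⊗ₖ (Xmat d)ᴴ)
    (h4 : T * ((1 : Matrix (ZMod d) (ZMod d) ℂ) ⊗ₖ Zmat d) * Tᴴ
        = (Xmat d)ᴴ ⊗ₖ (Zmat d)ᴴ) :
    (∀ j k : ZMod d,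
      (Matrix.of fun a b : ZMod d =>
          ∑ c : ZMod d, T (a, c) (j, k) * star (T (b, c) (j, k)))
        = ((d : ℂ))⁻¹ • (1 : Matrix (ZMod d) (ZMod d) ℂ) ∧
      (Matrix.of fun a b : ZMod d =>
          ∑ c : ZMod d, T (c, a) (j, k) * star (T (c, b) (j, k)))
        = ((d : ℂ))⁻¹ • (1 : Matrix (ZMod d) (ZMod d) ℂ)) ∧
    ¬ ∃ S₁ S₂ : Matrix (ZMod d) (ZMod d) ℂ,
        S₁ ∈ Matrix.unitaryGroup (ZMod d) ℂ ∧ S₂ ∈ Matrix.unitaryGroup (ZMod d) ℂ ∧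
        (T = S₁ ⊗ₖ S₂ ∨ T = (S₁ ⊗ₖ S₂) * swapOp d) := by
  have hprim := qprim d
  have hstar := qstar d
  have hω0 := qne d
  have hd0 : (d : ℂ) ≠ 0 := Nat.cast_ne_zero.2 (NeZero.ne d)
  have hUl : Tᴴ * T = 1 := by rw [← Matrix.star_eq_conjTranspose]; exact hT.1
  have h3' : T * (Zmat d ⊗ₖ (1 : Matrix (ZMod d) (ZMod d) ℂ))
      = ((Zmat d)ᴴ ⊗ₖ (Xmat d)ᴴ) * T := by
    have h := congrArg (fun M => M * T) h3
    simpa [Matrix.mul_assoc, hUl] using h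
  have h4' : T * ((1 : Matrix (ZMod d) (ZMod d) ℂ) ⊗ₖ Zmat d)
      = ((Xmat d)ᴴ ⊗ₖ (Zmat d)ᴴ) * T := by
    have h := congrArg (fun M => M * T) h4
    simpa [Matrix.mul_assoc, hUl] using h
  have hspow : ∀ m : ℕ, star (qomega d ^ m) = (qomega d ^ m)⁻¹ := by
    intro m; rw [star_pow, hstar, inv_pow]
  have F3 : ∀ j k a c : ZMod d,
      T (a, c) (j, k) = qomega d ^ (ZMod.val j + ZMod.val a) * T (a, c + 1) (j, k) := by
    intro j k a c
    have e := Matrix.ext_iff.2 h3' (a, c + 1) (j, k)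
    rw [entryL3, entryR3, add_sub_cancel_right, hspow] at e
    rw [pow_add]
    have hA : qomega d ^ (ZMod.val a) ≠ 0 := pow_ne_zero _ hω0
    field_simp at e
    linear_combination -e
  have F4 : ∀ j k c b : ZMod d,
      T (c, b) (j, k) = qomega d ^ (ZMod.val k + ZMod.val b) * T (c + 1, b) (j, k) := by
    intro j k c b
    have e := Matrix.ext_iff.2 h4' (c + 1, b) (j, k)
    rw [entryL4, entryR4, add_sub_cancel_right, hspow] at e
    rw [pow_add]
    have hB : qomega d ^ (ZMod.val b) ≠ 0 := pow_ne_zero _ hω0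
    field_simp at e
    linear_combination -e
  have hONE : ∀ j k : ZMod d,
      ∑ p : ZMod d × ZMod d, T p (j, k) * star (T p (j, k)) = 1 := by
    intro j k
    have e := Matrix.ext_iff.2 hUl (j, k) (j, k)
    simpa [Matrix.mul_apply, Matrix.conjTranspose_apply, Matrix.one_apply, mul_comm] using e
  have hval : ∀ j k a c : ZMod d,
      T (a, c) (j, k) * star (T (a, c) (j, k))
        = T ((0 : ZMod d), (0 : ZMod d)) (j, k) * star (T (0, 0) (j, k)) := by
    intro j k a c
    have k1 : T (a, (0 : ZMod d)) (j, k)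
        = (qomega d ^ (ZMod.val j + ZMod.val a)) ^ ZMod.val c * T (a, c) (j, k) := by
      have h := iter_rec d (qomega d) (ZMod.val j + ZMod.val a)
        (fun c => T (a, c) (j, k)) (fun c => F3 j k a c) (ZMod.val c)
      rwa [ZMod.natCast_rightInverse c] at h
    have k2 : T ((0 : ZMod d), (0 : ZMod d)) (j, k)
        = (qomega d ^ (ZMod.val k + ZMod.val (0 : ZMod d))) ^ ZMod.val a
            * T (a, (0 : ZMod d)) (j, k) := by
      have h := iter_rec d (qomega d) (ZMod.val k + ZMod.val (0 : ZMod d))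
        (fun c => T (c, 0) (j, k)) (fun c => F4 j k c 0) (ZMod.val a)
      rwa [ZMod.natCast_rightInverse a] at h
    have n1 := norm_shift (qomega d ^ (ZMod.val j + ZMod.val a)) (pow_ne_zero _ hω0)
      (hspow _) (ZMod.val c) _ _ k1
    have n2 := norm_shift (qomega d ^ (ZMod.val k + ZMod.val (0 : ZMod d))) (pow_ne_zero _ hω0)
      (hspow _) (ZMod.val a) _ _ k2
    rw [← n1, ← n2]
  have hv : ∀ j k : ZMod d,
      T ((0 : ZMod d), (0 : ZMod d)) (j, k) * star (T (0, 0) (j, k))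
        = ((d : ℂ) * (d : ℂ))⁻¹ := by
    intro j k
    have h := hONE j k
    rw [Finset.sum_congr rfl (fun p _ => hval j k p.1 p.2)] at h
    rw [Finset.sum_const, Finset.card_univ, Fintype.card_prod, ZMod.card,
      nsmul_eq_mul] at h
    push_cast at h
    exact eq_inv_of_mul_eq_one_right h
  have hdd : (d : ℂ) * ((d : ℂ) * (d : ℂ))⁻¹ = (d : ℂ)⁻¹ := by
    rw [mul_inv, ← mul_assoc, mul_inv_cancel₀ hd0, one_mul]
  have part1 : ∀ j k a b : ZMod d,
      ∑ c : ZMod d, T (a, c) (j, k) * star (T (b, c) (j, k))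
        = if a = b then (d : ℂ)⁻¹ else 0 := by
    intro j k a b
    have h := aux_sum d (qomega d) hprim hstar hω0
      (fun a c => T (a, c) (j, k)) (((d : ℂ) * (d : ℂ))⁻¹) (ZMod.val j)
      (fun a c => F3 j k a c) (fun a => by simpa using (hval j k a 0).trans (hv j k)) a b
    rw [h]
    exact if_congr Iff.rfl hdd rfl
  have part2 : ∀ j k a b : ZMod d,
      ∑ c : ZMod d, T (c, a) (j, k) * star (T (c, b) (j, k))
        = if a = b then (d : ℂ)⁻¹ else 0 := by
    intro j k a b
    have h := aux_sum d (qomega d) hprim hstar hω0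
      (fun a c => T (c, a) (j, k)) (((d : ℂ) * (d : ℂ))⁻¹) (ZMod.val k)
      (fun a c => F4 j k c a) (fun a => by simpa using (hval j k 0 a).trans (hv j k)) a b
    rw [h]
    exact if_congr Iff.rfl hdd rfl
  refine ⟨fun j k => ⟨?_, ?_⟩, ?_⟩
  · ext a b
    simp only [Matrix.of_apply, Matrix.smul_apply, Matrix.one_apply, smul_eq_mul]
    rw [part1 j k a b]
    by_cases hab : a = b <;> simp [hab]
  · ext a b
    simp only [Matrix.of_apply, Matrix.smul_apply, Matrix.one_apply, smul_eq_mul]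
    rw [part2 j k a b]
    by_cases hab : a = b <;> simp [hab]
  · rintro ⟨S₁, S₂, -, -, hc⟩
    have hprod : ∀ a c : ZMod d, T (a, c) ((0 : ZMod d), (0 : ZMod d)) = S₁ a 0 * S₂ c 0 := by
      intro a c
      rcases hc with h | h
      · rw [h]; rfl
      · rw [h]
        simp [Matrix.mul_apply, swapOp, Fintype.sum_prod_type, ite_and, mul_ite, ite_mul,
          Finset.sum_ite_eq, Finset.sum_ite_eq']
    have e : ∀ a b : ZMod d,
        S₁ a 0 * star (S₁ b 0) * (∑ c : ZMod d, S₂ c 0 * star (S₂ c 0))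
          = if a = b then (d : ℂ)⁻¹ else 0 := by
      intro a b
      calc S₁ a 0 * star (S₁ b 0) * (∑ c : ZMod d, S₂ c 0 * star (S₂ c 0))
          = ∑ c : ZMod d, T (a, c) ((0:ZMod d), (0:ZMod d))
              * star (T (b, c) ((0:ZMod d), (0:ZMod d))) := by
            rw [Finset.mul_sum]
            exact Finset.sum_congr rfl (fun c _ => by
              rw [hprod a c, hprod b c, star_mul']; ring)
        _ = _ := part1 0 0 a b
    have h01 : (0 : ZMod d) ≠ 1 := by
      haveI : Fact (1 < d) := ⟨hd⟩
      exact zero_ne_one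
    have hinv : (d : ℂ)⁻¹ ≠ 0 := inv_ne_zero hd0
    have e00 := e 0 0
    have e11 := e 1 1
    have e01 := e 0 1
    rw [if_pos rfl] at e00 e11
    rw [if_neg h01] at e01
    have hs : (∑ c : ZMod d, S₂ c 0 * star (S₂ c 0)) ≠ 0 := by
      intro h; exact hinv (by rw [← e00, h]; ring)
    have hS10 : S₁ 0 0 ≠ 0 := by
      intro h; exact hinv (by rw [← e00, h]; ring)
    have hS11 : star (S₁ 1 0) ≠ 0 := by
      intro h; exact hinv (by rw [← e11, h]; ring)
    exact (mul_ne_zero (mul_ne_zero hS10 hS11) hs) e01
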